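/- In the greedy set-building procedure for the distance bound, at each step where a full repair group is added (line 5), the entropy increase h_i and cardinality increase s_i satisfy s_i ≥ (k/M)·h_i + 1. -/

import Mathlib

/-- In the greedy set-building procedure, at a step where a full
repair group `Γ(j) = insert j Rj` (with `H(Y_j | Y_{Rj}) = 0`, i.e.
`H (insert j Rj) = H Rj`) is added to the current set `S` (with `j ∉ S`), the
entropy increase `h` and cardinality increase `s` satisfy `s ≥ (k/M)·h + 1`. -/
theorem stmt_8 (n k r : ℕ) (M : ℝ) (hM : 0 < M) (hk : 0 < k)
    (H : Finset (Fin n) → ℝ)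
    (hH0 : H ∅ = 0)
    (hmono : ∀ S T : Finset (Fin n), S ⊆ T → H S ≤ H T)
    (hsub : ∀ S T : Finset (Fin n), H (S ∪ T) + H (S ∩ T) ≤ H S + H T)
    (hsingle : ∀ i : Fin n, H {i} = M / k)
    (S : Finset (Fin n)) (j : Fin n) (Rj : Finset (Fin n))
    (hjR : j ∉ Rj) (hRcard : Rj.card ≤ r)
    (hrep : H (insert j Rj) = H Rj)
    (hjS : j ∉ S) :
    ((k : ℝ) / M) * (H (S ∪ insert j Rj) - H S) + 1 ≤
      (((insert j Rj) \ S).card : ℝ) := by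
  have hHnonneg : ∀ T : Finset (Fin n), 0 ≤ H T := by
    intro T
    have := hmono ∅ T (Finset.empty_subset T)
    linarith [hH0 ▸ this]
  -- aux: adding a set T to S increases entropy by at most |T \ S| * (M/k)
  have aux : ∀ (T A : Finset (Fin n)), H (A ∪ T) ≤ H A + ((T \ A).card : ℝ) * (M / k) := by
    intro T
    induction T using Finset.induction_on with
    | empty => intro A; simp
    | @insert a T ha ih =>
      intro A
      by_cases haA : a ∈ A
      · have h1 : A ∪ insert a T = A ∪ T := by
          rw [Finset.union_insert, Finset.insert_eq_self.mpr (Finset.mem_union_left T haA)]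
        have h2 : insert a T \ A = T \ A := Finset.insert_sdiff_of_mem T haA
        rw [h1, h2]; exact ih A
      · have h1 : A ∪ insert a T = {a} ∪ (A ∪ T) := by
          rw [Finset.union_insert, Finset.insert_eq]
        have h2 : insert a T \ A = insert a (T \ A) :=
          Finset.insert_sdiff_of_notMem T haA
        have haT : a ∉ T \ A := fun h => ha (Finset.mem_sdiff.mp h).1
        have hstep := hsub {a} (A ∪ T)
        have hMk : 0 < M / k := div_pos hM (by exact_mod_cast hk)
        calc H (A ∪ insert a T) = H ({a} ∪ (A ∪ T)) := by rw [h1]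
          _ ≤ H {a} + H (A ∪ T) - H ({a} ∩ (A ∪ T)) := by linarith
          _ ≤ M / k + H (A ∪ T) := by
              have := hHnonneg ({a} ∩ (A ∪ T)); rw [hsingle a]; linarith
          _ ≤ M / k + (H A + ((T \ A).card : ℝ) * (M / k)) := by linarith [ih A]
          _ = H A + (((T \ A).card : ℝ) + 1) * (M / k) := by ring
          _ = H A + ((insert a T \ A).card : ℝ) * (M / k) := by
              rw [h2, Finset.card_insert_of_notMem haT]; push_cast; ring
  -- H(S ∪ Γ) ≤ H(S ∪ Rj) by submodularity and the repair property
  have hsub1 := hsub (S ∪ Rj) (insert j Rj)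
  have hmono1 : H Rj ≤ H ((S ∪ Rj) ∩ insert j Rj) := by
    apply hmono
    intro x hx
    exact Finset.mem_inter.mpr ⟨Finset.mem_union_right _ hx, Finset.mem_insert_of_mem hx⟩
  have hunion : (S ∪ Rj) ∪ insert j Rj = S ∪ insert j Rj := by
    rw [Finset.union_insert, Finset.union_insert, Finset.union_assoc, Finset.union_self]
  have key : H (S ∪ insert j Rj) ≤ H (S ∪ Rj) := by
    rw [hunion] at hsub1
    rw [hrep] at hsub1
    linarith
  have haux := aux Rj S
  have hcard : ((insert j Rj) \ S).card = (Rj \ S).card + 1 := by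
    have h2 : insert j Rj \ S = insert j (Rj \ S) :=
      Finset.insert_sdiff_of_notMem Rj hjS
    have hjRS : j ∉ Rj \ S := fun h => hjR (Finset.mem_sdiff.mp h).1
    rw [h2, Finset.card_insert_of_notMem hjRS]
  have hkM : (0:ℝ) < k / M := div_pos (by exact_mod_cast hk) hM
  have hineq : H (S ∪ insert j Rj) - H S ≤ ((Rj \ S).card : ℝ) * (M / k) := by
    linarith
  have hmul : ((k:ℝ) / M) * (H (S ∪ insert j Rj) - H S) ≤
      ((k:ℝ) / M) * (((Rj \ S).card : ℝ) * (M / k)) := by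
    exact mul_le_mul_of_nonneg_left hineq (le_of_lt hkM)
  have hcancel : ((k:ℝ) / M) * (((Rj \ S).card : ℝ) * (M / k)) = ((Rj \ S).card : ℝ) := by
    field_simp
  rw [hcard]
  push_cast
  linarith [hmul, hcancel ▸ hmul]
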